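/- Let (V, ≤) be a finite partial order such that for every v ∈ V the set {u ∈ V : v ≤ u} is a chain (modeling ancestry in a rooted forest). Let w ∈ V be an element such that the set {u ∈ V : u ≤ w} is also a chain (modeling an edge lying on a chain of the tree, i.e., a path leading down to a leaf with no junctions below). Let 𝒫 be a finite nonempty family of pairs (b, a) ∈ V × V with b ≤ w ≤ a, where a pair (b, a) covers x ∈ V if b ≤ x ≤ a. Then there exist two pairs (b₁, a₁), (b₂, a₂) ∈ 𝒫 such that every element of V covered by some pair of 𝒫 is covered by (b₁, a₁) or by (b₂, a₂). (This is the 2-SNC property of chain edges in the tree cover problem.) -/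

import Mathlib

/-- Tree cover, 2-SNC property of chain edges: in a finite partial order where the
set of upper bounds of every element is a chain (ancestry in a rooted forest), if
`w` is an element whose set of lower bounds is also a chain (a chain edge) and
`P` is a finite nonempty family of pairs `(b, a)` with `b ≤ w ≤ a` (intervals
covering `w`), then two pairs of `P` cover every element covered by some pair
of `P`. -/
theorem tree_cover_chain_two_SNC {V : Type*} [Fintype V] [PartialOrder V]
    (hchain : ∀ v : V, IsChain (· ≤ ·) {u : V | v ≤ u})
    (w : V) (hdesc : IsChain (· ≤ ·) {u : V | u ≤ w})
    (P : Finset (V × V)) (hne : P.Nonempty)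
    (hcov : ∀ p ∈ P, p.1 ≤ w ∧ w ≤ p.2) :
    ∃ p ∈ P, ∃ q ∈ P, ∀ x : V, (∃ s ∈ P, s.1 ≤ x ∧ x ≤ s.2) →
      (p.1 ≤ x ∧ x ≤ p.2) ∨ (q.1 ≤ x ∧ x ≤ q.2) := by
  classical
  -- pick p with minimal first coordinate
  obtain ⟨p, hp, hpmin⟩ : ∃ m ∈ P.image Prod.fst, ∀ x ∈ P.image Prod.fst, ¬x < m :=
    (Finset.exists_minimal (hne.image Prod.fst)).imp
      (fun b hb => ⟨hb.1, fun x hx hlt => hlt.not_ge (hb.2 hx hlt.le)⟩)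
  obtain ⟨p', hp', rfl⟩ := Finset.mem_image.mp hp
  -- pick q with maximal second coordinate
  obtain ⟨a, ha, hamax⟩ : ∃ m ∈ P.image Prod.snd, ∀ x ∈ P.image Prod.snd, ¬m < x :=
    (Finset.exists_maximal (hne.image Prod.snd)).imp
      (fun b hb => ⟨hb.1, fun x hx hlt => hlt.not_ge (hb.2 hx hlt.le)⟩)
  obtain ⟨q', hq', rfl⟩ := Finset.mem_image.mp ha
  refine ⟨p', hp', q', hq', ?_⟩
  rintro x ⟨s, hs, hsx, hxs⟩
  have hsw := hcov s hs
  have hpw := hcov p' hp'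
  have hqw := hcov q' hq'
  -- p'.1 is least among first coordinates (they're in the chain below w)
  have hleast : p'.1 ≤ s.1 := by
    have hcomp := hdesc hpw.1 hsw.1
    by_cases h : p'.1 = s.1
    · exact h.le
    · rcases hcomp h with h1 | h1
      · exact h1
      · exact absurd (lt_of_le_of_ne h1 (Ne.symm h)) (hpmin s.1 (Finset.mem_image_of_mem _ hs))
  -- q'.2 is greatest among second coordinates (they're in the chain above w)
  have hgreat : s.2 ≤ q'.2 := by
    have hcomp := (hchain w) hqw.2 hsw.2
    by_cases h : q'.2 = s.2
    · exact h.ge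
    · rcases hcomp h with h1 | h1
      · exact absurd (lt_of_le_of_ne h1 h) (hamax s.2 (Finset.mem_image_of_mem _ hs))
      · exact h1
  -- x and w are comparable since both are above s.1
  have hcomp := (hchain s.1) (show x ∈ {u : V | s.1 ≤ u} from hsx) (show w ∈ {u : V | s.1 ≤ u} from hsw.1)
  by_cases hxw : x = w
  · subst hxw; exact Or.inl ⟨hleast.trans hsx, hpw.2⟩
  rcases hcomp hxw with h | h
  · exact Or.inl ⟨hleast.trans hsx, h.trans hpw.2⟩
  · exact Or.inr ⟨hqw.1.trans h, hxs.trans hgreat⟩
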